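/- Let M be a finite semigroup of period p with a surjective homomorphism ν onto the 3-element left zero semigroup with adjoined identity L¹ = {1, a, b} (where 1 is an identity and xy = x for x,y ∈ {a,b}). Then M contains a 3-element subsemigroup isomorphic to L¹: namely, there exist idempotents 𝖾 ∈ ν⁻¹(1), 𝖺 ∈ ν⁻¹(a), 𝖻 ∈ ν⁻¹(b) with 𝖾𝖺 = 𝖺𝖾 = 𝖺, 𝖾𝖻 = 𝖻𝖾 = 𝖻, 𝖺𝖻 = 𝖺, 𝖻𝖺 = 𝖻. -/

import Mathlib

def pw {S : Type*} [Mul S] (x : S) : ℕ → S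
  | 0 => x
  | n + 1 => pw x n * x

inductive L1 : Type
  | one | a | b
  deriving DecidableEq

instance : Fintype L1 where
  elems := {L1.one, L1.a, L1.b}
  complete := by intro x; cases x <;> decide

def L1.mul : L1 → L1 → L1
  | .one, x => x
  | x, .one => x
  | x, _ => x

instance : Semigroup L1 where
  mul := L1.mul
  mul_assoc := by decide

theorem pw_add' {S : Type*} [Semigroup S] (x : S) (m n : ℕ) :
    pw x (m + n + 1) = pw x m * pw x n := by
  induction n with
  | zero => rfl
  | succ n ih =>
      show pw x (m + n + 1) * x = pw x m * (pw x n * x)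
      rw [ih, mul_assoc]

theorem pw_map {S T : Type*} [Semigroup S] [Semigroup T] (f : S →ₙ* T) (x : S) (n : ℕ) :
    f (pw x n) = pw (f x) n := by
  induction n with
  | zero => rfl
  | succ n ih => show f (pw x n * x) = pw (f x) n * f x; rw [map_mul, ih]

theorem L1_idem : ∀ z : L1, z * z = z := by decide

theorem pw_L1 (z : L1) (n : ℕ) : pw z n = z := by
  induction n with
  | zero => rfl
  | succ n ih =>
      show pw z n * z = z
      rw [ih]
      exact L1_idem z

theorem pw_labs {S : Type*} [Semigroup S] {e z : S} (h : e * z = z) (n : ℕ) :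
    e * pw z n = pw z n := by
  induction n with
  | zero => exact h
  | succ n ih => show e * (pw z n * z) = pw z n * z; rw [← mul_assoc, ih]

theorem pw_rabs {S : Type*} [Semigroup S] {c z : S} (h : z * c = z) (n : ℕ) :
    pw z n * c = pw z n := by
  induction n with
  | zero => exact h
  | succ n ih => show pw z n * z * c = pw z n * z; rw [mul_assoc, h]

theorem stmt19 {M : Type*} [Semigroup M] [Finite M] (p : ℕ) (hp : 0 < p)
    (hper : ∃ i : ℕ, 0 < i ∧ (∀ x : M, pw x (i - 1) = pw x (i - 1 + p)) ∧
      ∀ q : ℕ, 0 < q → (∀ x : M, pw x (i - 1) = pw x (i - 1 + q)) → p ≤ q)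
    (ν : M →ₙ* L1) (hsurj : Function.Surjective ν) :
    ∃ E A B : M, ν E = L1.one ∧ ν A = L1.a ∧ ν B = L1.b ∧
      E * E = E ∧ A * A = A ∧ B * B = B ∧
      E * A = A ∧ A * E = A ∧ E * B = B ∧ B * E = B ∧
      A * B = A ∧ B * A = B := by
  obtain ⟨i, hi0, h1, -⟩ := hper
  obtain ⟨q, rfl⟩ : ∃ q, p = q + 1 := ⟨p - 1, by omega⟩
  set j := i - 1 with hj
  -- pumping lemmas
  have hstep : ∀ (x : M) (m : ℕ), pw x (j + m) = pw x (j + m + (q + 1)) := by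
    intro x m
    induction m with
    | zero => simpa using h1 x
    | succ m ih =>
        have h2 : pw x (j + m + 1) = pw x (j + m + (q + 1) + 1) := by
          show pw x (j + m) * x = pw x (j + m + (q + 1)) * x
          rw [ih]
        calc pw x (j + (m + 1)) = pw x (j + m + 1) := by
              rw [show j + (m + 1) = j + m + 1 by omega]
          _ = pw x (j + m + (q + 1) + 1) := h2
          _ = pw x (j + (m + 1) + (q + 1)) := by
              rw [show j + m + (q + 1) + 1 = j + (m + 1) + (q + 1) by omega]
  have hmul : ∀ (x : M) (m k : ℕ), pw x (j + m) = pw x (j + m + k * (q + 1)) := by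
    intro x m k
    induction k with
    | zero => simp
    | succ k ih =>
        have e2 : j + m + (k + 1) * (q + 1) = j + (m + k * (q + 1)) + (q + 1) := by ring
        rw [e2, ← hstep x (m + k * (q + 1))]
        have e3 : j + (m + k * (q + 1)) = j + m + k * (q + 1) := by omega
        rw [e3, ← ih]
  -- the idempotent-power exponent
  set n0 : ℕ := j + (j * q + q) with hn0
  have idem : ∀ z : M, pw z n0 * pw z n0 = pw z n0 := by
    intro z
    rw [← pw_add']
    have e1 : n0 + n0 + 1 = j + (j * q + q) + (j + 1) * (q + 1) := by rw [hn0]; ring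
    rw [e1, ← hmul z (j * q + q) (j + 1)]
  have νpw : ∀ z : M, ν (pw z n0) = ν z := by
    intro z; rw [pw_map, pw_L1]
  -- elements
  obtain ⟨w, hw⟩ := hsurj L1.one
  obtain ⟨x, hx⟩ := hsurj L1.a
  obtain ⟨y, hy⟩ := hsurj L1.b
  set e : M := pw w n0 with he'
  have he : e * e = e := idem w
  have hνe : ν e = L1.one := by rw [he', νpw, hw]
  set x' : M := e * x * e with hx'
  set y' : M := e * y * e with hy'
  have hex' : e * x' = x' := by rw [hx', ← mul_assoc, ← mul_assoc, he]
  have hx'e : x' * e = x' := by rw [hx', mul_assoc, mul_assoc, he, ← mul_assoc]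
  have hey' : e * y' = y' := by rw [hy', ← mul_assoc, ← mul_assoc, he]
  have hy'e : y' * e = y' := by rw [hy', mul_assoc, mul_assoc, he, ← mul_assoc]
  set A0 : M := pw x' n0 with hA0'
  have hA0 : A0 * A0 = A0 := idem x'
  have hνA0 : ν A0 = L1.a := by
    rw [hA0', νpw, hx', map_mul, map_mul, hνe, hx]; decide
  have heA0 : e * A0 = A0 := pw_labs hex' n0
  have hA0e : A0 * e = A0 := pw_rabs hx'e n0
  set B : M := pw (y' * A0) n0 with hB'
  have hB : B * B = B := idem _
  have hνB : ν B = L1.b := by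
    rw [hB', νpw, map_mul, hνA0, hy', map_mul, map_mul, hνe, hy]; decide
  have heB : e * B = B := pw_labs (by rw [← mul_assoc, hey']) n0
  have hBe : B * e = B := pw_rabs (by rw [mul_assoc, hA0e]) n0
  have hBA0 : B * A0 = B := pw_rabs (by rw [mul_assoc, hA0]) n0
  refine ⟨e, A0 * B, B, hνe, ?_, hνB, he, ?_, hB, ?_, ?_, heB, hBe, ?_, ?_⟩
  · rw [map_mul, hνA0, hνB]; decide
  · rw [mul_assoc, ← mul_assoc B, hBA0, hB]
  · rw [← mul_assoc, heA0]
  · rw [mul_assoc, hBe]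
  · rw [mul_assoc, hB]
  · rw [← mul_assoc, hBA0, hB]
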